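/- arXiv:math/0409053 — 2 statements merged into one kernel-verified Lean document; each statement's English description precedes it below -/
import Mathlib

section
/- The following three conditions are equivalent: (i) the pair C, C^du is very good for integrating g; (ii) the pair C, C^du is good for integrating g and Lie(M^×) = Lie(M); (iii) the pair C, C^du is good for integrating g and the unit group M^× is dense in M in the Zariski topology. -/
open TensorProduct

attribute [instance 100] LieRing.ofAssociativeRing

universe u v w

/-- The data of a (full sub)category `C` of `g`-modules together with a category of duals:
an index type `ι`, for each index a `g`-module `V i`, and a chosen point-separating
subspace `du i` of the full linear dual of `V i`. -/
structure TannakaSetting (F : Type u) [Field F] (g : Type v) [LieRing g] [LieAlgebra F g] where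
  ι : Type w
  V : ι → Type w
  [iAdd : ∀ i, AddCommGroup (V i)]
  [iMod : ∀ i, Module F (V i)]
  ρ : ∀ i, g →ₗ⁅F⁆ Module.End F (V i)
  du : ∀ i, Submodule F (Module.Dual F (V i))

attribute [instance] TannakaSetting.iAdd TannakaSetting.iMod

namespace TannakaSetting

variable {F : Type u} [Field F] {g : Type v} [LieRing g] [LieAlgebra F g]
variable (D : TannakaSetting F g)

/-- `g`-equivariant linear maps between objects of the category. -/
def IsHom {i j : D.ι} (f : D.V i →ₗ[F] D.V j) : Prop :=
  ∀ x : g, f ∘ₗ (D.ρ i x : Module.End F (D.V i)) = (D.ρ j x : Module.End F (D.V j)) ∘ₗ f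

/-- An endomorphism of `V i` lies in `End_{V^du}(V)`, i.e. its transpose preserves
the chosen dual subspace. -/
def PreservesDu (i : D.ι) (f : Module.End F (D.V i)) : Prop :=
  ∀ φ ∈ D.du i, f.dualMap φ ∈ D.du i

/-- The action of `x ∈ g` on a tensor product of two objects. -/
noncomputable def tensorρ (i j : D.ι) (x : g) : Module.End F (D.V i ⊗[F] D.V j) :=
  TensorProduct.map (D.ρ i x) LinearMap.id + TensorProduct.map LinearMap.id (D.ρ j x)

/-- `e` realizes `V k` as a tensor product of the `g`-modules `V i` and `V j`. -/
def IsTensorProd (i j k : D.ι) (e : D.V k ≃ₗ[F] (D.V i ⊗[F] D.V j)) : Prop :=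
  ∀ x : g, e.toLinearMap ∘ₗ (D.ρ k x : Module.End F (D.V k)) = D.tensorρ i j x ∘ₗ e.toLinearMap

/-- `e` realizes `V k` as a direct sum of the `g`-modules `V i` and `V j`. -/
def IsSumProd (i j k : D.ι) (e : D.V k ≃ₗ[F] (D.V i × D.V j)) : Prop :=
  ∀ x : g, e.toLinearMap ∘ₗ (D.ρ k x : Module.End F (D.V k)) =
    ((D.ρ i x : Module.End F (D.V i)).prodMap (D.ρ j x : Module.End F (D.V j))) ∘ₗ e.toLinearMap

/-- `V i` is a one-dimensional trivial `g`-module. -/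
def IsTrivOneDim (i : D.ι) : Prop :=
  Module.finrank F (D.V i) = 1 ∧ ∀ x : g, (D.ρ i x : Module.End F (D.V i)) = 0

/-- The functional `φ ⊗ ψ` on a tensor product. -/
noncomputable def tensorDual {i j : D.ι} (φ : Module.Dual F (D.V i))
    (ψ : Module.Dual F (D.V j)) : Module.Dual F (D.V i ⊗[F] D.V j) :=
  TensorProduct.dualDistrib F (D.V i) (D.V j) (φ ⊗ₜ[F] ψ)

/-- The axioms on the pair of categories `C`, `C^du`:
`C` is closed under isomorphism, (binary) direct sums, tensor products, submodules,
contains a one-dimensional trivial module, `g` acts faithfully, and the duals separate points,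
are stable under the transposed `g`-action and under transposes of morphisms, and are compatible
with direct sums and tensor products. -/
structure IsGoodSetting : Prop where
  separating : ∀ (i : D.ι) (v : D.V i), v ≠ 0 → ∃ φ ∈ D.du i, φ v ≠ 0
  du_g : ∀ (i : D.ι) (x : g), D.PreservesDu i (D.ρ i x)
  du_hom : ∀ (i j : D.ι) (f : D.V i →ₗ[F] D.V j), D.IsHom f →
    ∀ ψ ∈ D.du j, f.dualMap ψ ∈ D.du i
  faithful : ∀ x : g, (∀ i, (D.ρ i x : Module.End F (D.V i)) = 0) → x = 0
  exists_triv : ∃ i, D.IsTrivOneDim i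
  exists_sum : ∀ i j : D.ι, ∃ (k : D.ι) (e : D.V k ≃ₗ[F] (D.V i × D.V j)), D.IsSumProd i j k e
  exists_tensor : ∀ i j : D.ι,
    ∃ (k : D.ι) (e : D.V k ≃ₗ[F] (D.V i ⊗[F] D.V j)), D.IsTensorProd i j k e
  du_tensor : ∀ (i j k : D.ι) (e : D.V k ≃ₗ[F] (D.V i ⊗[F] D.V j)), D.IsTensorProd i j k e →
    ∀ φ ∈ D.du i, ∀ ψ ∈ D.du j, e.toLinearMap.dualMap (D.tensorDual φ ψ) ∈ D.du k
  du_sum : ∀ (i j k : D.ι) (e : D.V k ≃ₗ[F] (D.V i × D.V j)), D.IsSumProd i j k e →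
    ∀ ξ : Module.Dual F (D.V k), ξ ∈ D.du k ↔
      ∃ φ ∈ D.du i, ∃ ψ ∈ D.du j,
        ξ = e.toLinearMap.dualMap
          ((LinearMap.fst F (D.V i) (D.V j)).dualMap φ +
            (LinearMap.snd F (D.V i) (D.V j)).dualMap ψ)
  submod_closed : ∀ (i : D.ι) (U : Submodule F (D.V i)), (∀ x : g, ∀ u ∈ U, D.ρ i x u ∈ U) →
    ∃ (k : D.ι) (e : D.V k ≃ₗ[F] ↥U), ∀ (x : g) (v : D.V k),
      (↑(e ((D.ρ k x) v)) : D.V i) = D.ρ i x ↑(e v)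
  isoClosed : ∀ (W : Type w) [AddCommGroup W] [Module F W] (ρW : g →ₗ⁅F⁆ Module.End F W)
    (i : D.ι) (e : D.V i ≃ₗ[F] W), (∀ (x : g) (v : D.V i), e (D.ρ i x v) = ρW x (e v)) →
    ∃ (k : D.ι) (e' : D.V k ≃ₗ[F] W), ∀ (x : g) (v : D.V k), e' (D.ρ k x v) = ρW x (e' v)

/-- The algebra `Nat` of natural transformations: families of endomorphisms
`m i ∈ End_{V^du}(V i)` commuting with all `g`-equivariant maps between objects. -/
def NatAlg : Set (∀ i, Module.End F (D.V i)) :=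
  { m | (∀ i, D.PreservesDu i (m i)) ∧
        ∀ (i j : D.ι) (f : D.V i →ₗ[F] D.V j), D.IsHom f → f ∘ₗ m i = m j ∘ₗ f }

/-- The Tannaka monoid `M`: natural transformations compatible with tensor products and
acting as the identity on trivial one-dimensional modules. -/
def M : Set (∀ i, Module.End F (D.V i)) :=
  { m | m ∈ D.NatAlg ∧
        (∀ (i j k : D.ι) (e : D.V k ≃ₗ[F] (D.V i ⊗[F] D.V j)), D.IsTensorProd i j k e →
          e.toLinearMap ∘ₗ m k = TensorProduct.map (m i) (m j) ∘ₗ e.toLinearMap) ∧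
        (∀ i, D.IsTrivOneDim i → m i = 1) }

/-- The matrix coefficient `f_{φ v}` as a function on the Tannaka monoid `M`. -/
def matCoef (i : D.ι) (φ : Module.Dual F (D.V i)) (v : D.V i) : ↥D.M → F :=
  fun m => φ (m.1 i v)

/-- The coordinate ring `F[M]` of matrix coefficients (a set of functions on `M`). -/
def coordRing : Set (↥D.M → F) :=
  { f | ∃ (i : D.ι) (φ : Module.Dual F (D.V i)) (v : D.V i), φ ∈ D.du i ∧ f = D.matCoef i φ v }

/-- The Lie algebra `Lie(M)` of the Tannaka monoid. -/
def LieM : Set (∀ i, Module.End F (D.V i)) :=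
  { x | x ∈ D.NatAlg ∧
        (∀ (i j k : D.ι) (e : D.V k ≃ₗ[F] (D.V i ⊗[F] D.V j)), D.IsTensorProd i j k e →
          e.toLinearMap ∘ₗ x k =
            (TensorProduct.map (x i) LinearMap.id +
              TensorProduct.map LinearMap.id (x j)) ∘ₗ e.toLinearMap) ∧
        (∀ i, D.IsTrivOneDim i → x i = 0) ∧
        (∃ δ : (↥D.M → F) → F, ∀ (i : D.ι) (φ : Module.Dual F (D.V i)) (v : D.V i),
          φ ∈ D.du i → δ (D.matCoef i φ v) = φ (x i v)) }

/-- The Lie algebra `Lie(N)` of a submonoid `N ⊆ M`: those `x ∈ Lie(M)` whose derivation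
`δ_x` annihilates the vanishing ideal `I(N) ⊆ F[M]`. -/
def LieOf (N : Set (↥D.M)) : Set (∀ i, Module.End F (D.V i)) :=
  { x | x ∈ D.LieM ∧ ∀ (i : D.ι) (φ : Module.Dual F (D.V i)) (v : D.V i), φ ∈ D.du i →
      (∀ n ∈ N, D.matCoef i φ v n = 0) → φ (x i v) = 0 }

/-- The unit group `M^×` of the Tannaka monoid, as a subset of `M`. -/
def unitsSet : Set (↥D.M) :=
  { m | ∃ n : ↥D.M, m.1 * n.1 = 1 ∧ n.1 * m.1 = 1 }

/-- The pair `C`, `C^du` is good for integrating `g`: `g ⊆ Lie(M)`. -/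
def Good : Prop := ∀ x : g, (fun i => (D.ρ i x : Module.End F (D.V i))) ∈ D.LieM

/-- The pair `C`, `C^du` is very good for integrating `g`: `g ⊆ Lie(M^×)`. -/
def VeryGood : Prop :=
  ∀ x : g, (fun i => (D.ρ i x : Module.End F (D.V i))) ∈ D.LieOf D.unitsSet

/-- A subset `S ⊆ M` is Zariski dense in `M`. -/
def DenseIn (S : Set (↥D.M)) : Prop :=
  ∀ f ∈ D.coordRing, (∀ m ∈ S, f m = 0) → ∀ m, f m = 0

theorem one_mem_M : (1 : ∀ i, Module.End F (D.V i)) ∈ D.M := by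
  refine ⟨⟨?_, ?_⟩, ?_, ?_⟩
  · intro i φ hφ
    simpa [Module.End.one_eq_id, LinearMap.dualMap_id] using hφ
  · intro i j f _
    ext v
    simp
  · intro i j k e _
    ext v
    simp [TensorProduct.map_one]
  · intro i _
    rfl

/-- The unit of the Tannaka monoid as an element of the subtype `↥M`. -/
def oneM : ↥D.M := ⟨1, D.one_mem_M⟩

theorem mul_mem_M {m n : ∀ i, Module.End F (D.V i)} (hm : m ∈ D.M) (hn : n ∈ D.M) :
    m * n ∈ D.M := by
  obtain ⟨⟨hmd, hmh⟩, hmt, hm1⟩ := hm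
  obtain ⟨⟨hnd, hnh⟩, hnt, hn1⟩ := hn
  refine ⟨⟨?_, ?_⟩, ?_, ?_⟩
  · intro i φ hφ
    have h : ((m * n) i).dualMap φ = (n i).dualMap ((m i).dualMap φ) := rfl
    rw [h]
    exact hnd i _ (hmd i φ hφ)
  · intro i j f hf
    have : f ∘ₗ (m i * n i) = (m j * n j) ∘ₗ f := by
      simp only [Module.End.mul_eq_comp, ← LinearMap.comp_assoc, hmh i j f hf]
      rw [LinearMap.comp_assoc, hnh i j f hf, LinearMap.comp_assoc]
    simpa using this
  · intro i j k e he
    have h1 := hmt i j k e he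
    have h2 := hnt i j k e he
    have : e.toLinearMap ∘ₗ (m k * n k) =
        (TensorProduct.map (m i) (m j) ∘ₗ TensorProduct.map (n i) (n j)) ∘ₗ e.toLinearMap := by
      simp only [Module.End.mul_eq_comp, ← LinearMap.comp_assoc, h1]
      rw [LinearMap.comp_assoc, h2, LinearMap.comp_assoc]
    simpa [← TensorProduct.map_comp, Module.End.mul_eq_comp] using this
  · intro i hi
    have : (m * n) i = m i * n i := rfl
    rw [this, hm1 i hi, hn1 i hi, one_mul]

theorem units_mul {a b : ↥D.M} (ha : a ∈ D.unitsSet) (hb : b ∈ D.unitsSet) :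
    (⟨a.1 * b.1, D.mul_mem_M a.2 b.2⟩ : ↥D.M) ∈ D.unitsSet := by
  obtain ⟨a', ha1, ha2⟩ := ha
  obtain ⟨b', hb1, hb2⟩ := hb
  refine ⟨⟨b'.1 * a'.1, D.mul_mem_M b'.2 a'.2⟩, ?_, ?_⟩
  · show a.1 * b.1 * (b'.1 * a'.1) = 1
    rw [mul_assoc, ← mul_assoc b.1, hb1, one_mul, ha1]
  · show b'.1 * a'.1 * (a.1 * b.1) = 1
    rw [mul_assoc, ← mul_assoc a'.1, ha2, one_mul, hb2]

theorem oneM_mem_units : D.oneM ∈ D.unitsSet :=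
  ⟨D.oneM, one_mul 1, one_mul 1⟩

/-- The "du-closure" of the `M^×`-orbit of `v` in `V i`. -/
def Wsub (i : D.ι) (v : D.V i) : Submodule F (D.V i) where
  carrier := {w | ∀ ψ ∈ D.du i, (∀ n ∈ D.unitsSet, ψ ((n : ↥D.M).1 i v) = 0) →
      ∀ n ∈ D.unitsSet, ψ (n.1 i w) = 0}
  add_mem' := by
    intro a b ha hb ψ hψ hψv n hn
    rw [map_add, map_add, ha ψ hψ hψv n hn, hb ψ hψ hψv n hn, add_zero]
  zero_mem' := by
    intro ψ hψ hψv n hn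
    rw [map_zero, map_zero]
  smul_mem' := by
    intro c a ha ψ hψ hψv n hn
    rw [map_smul, map_smul, ha ψ hψ hψv n hn, smul_zero]

theorem veryGood_dense (HG : D.IsGoodSetting) (hvg : D.VeryGood) : D.DenseIn D.unitsSet := by
  intro f hf hvan m
  obtain ⟨i, φ, v, hφ, rfl⟩ := hf
  have hvW : v ∈ D.Wsub i v := fun ψ hψ hψv n hn => hψv n hn
  have hinv : ∀ (x : g), ∀ w ∈ D.Wsub i v, D.ρ i x w ∈ D.Wsub i v := by
    intro x w hw ψ hψ hψv n hn
    have hφ' : (n.1 i).dualMap ψ ∈ D.du i := n.2.1.1 i ψ hψ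
    have hkey := (hvg x).2 i ((n.1 i).dualMap ψ) w hφ' ?_
    · simpa using hkey
    · intro m' hm'
      have hw' := hw ψ hψ hψv ⟨n.1 * m'.1, D.mul_mem_M n.2 m'.2⟩ (D.units_mul hn hm')
      simpa [matCoef] using hw'
  obtain ⟨k, e, hke⟩ := HG.submod_closed i (D.Wsub i v) hinv
  set fm : D.V k →ₗ[F] D.V i := (D.Wsub i v).subtype ∘ₗ e.toLinearMap with hfm
  have hhom : D.IsHom fm := by
    intro x
    ext u
    simpa [fm] using hke x u
  have hnat := m.2.1.2 k i fm hhom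
  have hmem : m.1 i v ∈ D.Wsub i v := by
    have h1 : m.1 i (fm (e.symm ⟨v, hvW⟩)) = fm (m.1 k (e.symm ⟨v, hvW⟩)) := by
      have := congrArg (fun h => h (e.symm ⟨v, hvW⟩)) hnat
      simpa using this.symm
    have hfv : fm (e.symm ⟨v, hvW⟩) = v := by simp [fm]
    rw [hfv] at h1
    rw [h1]
    have : fm (m.1 k (e.symm ⟨v, hvW⟩)) = ↑(e (m.1 k (e.symm ⟨v, hvW⟩))) := by simp [fm]
    rw [this]
    exact (e (m.1 k (e.symm ⟨v, hvW⟩))).2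
  have hvan' : ∀ n ∈ D.unitsSet, φ (n.1 i v) = 0 := fun n hn => hvan n hn
  have := hmem φ hφ hvan' D.oneM D.oneM_mem_units
  simpa [matCoef, oneM] using this

theorem dense_lieEq (hd : D.DenseIn D.unitsSet) : D.LieOf D.unitsSet = D.LieM := by
  ext x
  constructor
  · exact fun h => h.1
  · intro hx
    refine ⟨hx, ?_⟩
    intro i φ v hφ hvan
    have h0 : D.matCoef i φ v = D.matCoef i 0 v := by
      funext n
      have := hd (D.matCoef i φ v) ⟨i, φ, v, hφ, rfl⟩ hvan n
      simpa [matCoef] using this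
    obtain ⟨δ, hδ⟩ := hx.2.2.2
    have h1 := hδ i φ v hφ
    have h2 := hδ i 0 v (Submodule.zero_mem _)
    rw [h0, h2] at h1
    simpa using h1.symm

end TannakaSetting

open TensorProduct

variable {F : Type u} [Field F] [CharZero F] {g : Type v} [LieRing g] [LieAlgebra F g]

/-- **Good versus very good for integrating `g`.**
The following are equivalent: (i) the pair `C`, `C^du` is very good for integrating `g`;
(ii) the pair is good for integrating `g` and `Lie(M^×) = Lie(M)`;
(iii) the pair is good for integrating `g` and the unit group `M^×` is Zariski dense in `M`. -/
theorem stmt_4 (D : TannakaSetting F g) (HG : D.IsGoodSetting) :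
    (D.VeryGood ↔ (D.Good ∧ D.LieOf D.unitsSet = D.LieM)) ∧
    (D.VeryGood ↔ (D.Good ∧ D.DenseIn D.unitsSet)) := by
  have h1 : D.VeryGood → D.DenseIn D.unitsSet := D.veryGood_dense HG
  have h2 : D.DenseIn D.unitsSet → D.LieOf D.unitsSet = D.LieM := D.dense_lieEq
  have h3 : D.VeryGood → D.Good := fun hv x => (hv x).1
  have h4 : D.Good → D.LieOf D.unitsSet = D.LieM → D.VeryGood := by
    intro hg he x
    rw [TannakaSetting.VeryGood] at *
    show _ ∈ D.LieOf D.unitsSet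
    rw [he]
    exact hg x
  refine ⟨⟨fun hv => ⟨h3 hv, h2 (h1 hv)⟩, fun ⟨hg, he⟩ => h4 hg he⟩,
    ⟨fun hv => ⟨h3 hv, h1 hv⟩, fun ⟨hg, hd⟩ => h4 hg (h2 hd)⟩⟩
end

section
/- Suppose every g-module contained in C is finite dimensional, C^du is the category of full duals, and in addition for every g-module V contained in C its dual g-module V* (with action (x·φ)(v) := −φ(x·v)) is also contained in C. Then the Tannaka monoid M is a group, and the coordinate ring F[M], with the bialgebra structure induced by the multiplication of M and with the comorphism of the inversion map as antipode, is a Hopf algebra. -/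
open TensorProduct

attribute [local instance 100] LieRing.ofAssociativeRing

universe u v w

open TensorProduct


namespace TannakaAux

open TannakaSetting

variable {F : Type u} [Field F] {g : Type v} [LieRing g] [LieAlgebra F g]

/-- The fundamental pairing identity: for `m ∈ M` and a dual realization `e : V k ≃ V i*`,
`(e (m k w)) (m i v) = (e w) v`. -/
lemma pairing (D : TannakaSetting F g) (HG : D.IsGoodSetting)
    (i : D.ι) {k : D.ι} (e : D.V k ≃ₗ[F] Module.Dual F (D.V i))
    (he : ∀ (x : g) (v : D.V k),
      e (D.ρ k x v) = - (D.ρ i x : Module.End F (D.V i)).dualMap (e v))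
    {m : ∀ i, Module.End F (D.V i)} (hm : m ∈ D.M) :
    ∀ (w : D.V k) (v : D.V i), (e (m k w)) (m i v) = (e w) v := by
  obtain ⟨t, ht⟩ := HG.exists_triv
  obtain ⟨l, et, hte⟩ := HG.exists_tensor i k
  haveI : Nontrivial (D.V t) := Module.nontrivial_of_finrank_pos (R := F)
    (by rw [ht.1]; exact Nat.one_pos)
  obtain ⟨t0, ht0⟩ := exists_ne (0 : D.V t)
  set β : (D.V i ⊗[F] D.V k) →ₗ[F] F :=
    TensorProduct.lift (e : D.V k →ₗ[F] Module.Dual F (D.V i)).flip with hβdef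
  have hβtmul : ∀ (v : D.V i) (w : D.V k), β (v ⊗ₜ[F] w) = (e w) v := by
    intro v w; simp [hβdef]
  set f0 : F →ₗ[F] D.V t := LinearMap.toSpanSingleton F (D.V t) t0 with hf0def
  have hf0inj : Function.Injective f0 := by
    intro a b hab
    exact smul_left_injective F ht0 hab
  have hβρ : ∀ (x : g) (u : D.V i ⊗[F] D.V k), β (D.tensorρ i k x u) = 0 := by
    intro x u
    induction u using TensorProduct.induction_on with
    | zero => simp
    | tmul v w =>
        have h1 : D.tensorρ i k x (v ⊗ₜ[F] w) =
            (D.ρ i x v) ⊗ₜ[F] w + v ⊗ₜ[F] (D.ρ k x w) := by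
          simp [TannakaSetting.tensorρ]
        rw [h1, map_add, hβtmul, hβtmul, he x w]
        simp
    | add a b ha hb => simp [ha, hb]
  have fhom : D.IsHom (f0 ∘ₗ β ∘ₗ et.toLinearMap) := by
    intro x
    rw [ht.2 x]
    ext u
    have h1 : et (D.ρ l x u) = D.tensorρ i k x (et u) := by
      have := congrArg (fun (q : D.V l →ₗ[F] (D.V i ⊗[F] D.V k)) => q u) (hte x)
      simpa using this
    simp only [LinearMap.comp_apply, LinearEquiv.coe_coe, LinearMap.zero_comp,
      LinearMap.zero_apply, h1, hβρ, map_zero]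
  have hnat := hm.1.2 l t (f0 ∘ₗ β ∘ₗ et.toLinearMap) fhom
  have htriv : m t = 1 := hm.2.2 t ht
  rw [htriv] at hnat
  have htens := hm.2.1 i k l et hte
  intro w v
  have h2 : et ((m l) (et.symm (v ⊗ₜ[F] w))) = (m i v) ⊗ₜ[F] (m k w) := by
    have := congrArg (fun (q : D.V l →ₗ[F] (D.V i ⊗[F] D.V k)) => q (et.symm (v ⊗ₜ[F] w))) htens
    simpa using this
  have h3 := congrArg (fun (q : D.V l →ₗ[F] D.V t) => q (et.symm (v ⊗ₜ[F] w))) hnat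
  simp only [LinearMap.comp_apply, LinearEquiv.coe_coe, Module.End.one_apply,
    Module.End.mul_apply] at h3
  rw [h2, et.apply_symm_apply, hβtmul, hβtmul] at h3
  exact hf0inj h3

end TannakaAux

variable {F : Type u} [Field F] [CharZero F] {g : Type v} [LieRing g] [LieAlgebra F g]

/-- **The classical case with duals: `M` is a group and `F[M]` is a Hopf algebra.**
Suppose every `g`-module contained in `C` is finite dimensional, `C^du` is the category of
full duals, and for every `g`-module `V` in `C` its dual `g`-module `V*` (with action
`(x · φ)(v) = -φ(x · v)`) is also contained in `C`.  Then the Tannaka monoid `M` is a group,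
and `F[M]`, with the bialgebra structure induced by the multiplication of `M` and the
comorphism of the inversion map as antipode, is a Hopf algebra. -/
theorem stmt_13 (D : TannakaSetting F g) (HG : D.IsGoodSetting)
    (hfd : ∀ i, FiniteDimensional F (D.V i))
    (hfull : ∀ i, D.du i = ⊤)
    (hdual : ∀ i, ∃ (k : D.ι) (e : D.V k ≃ₗ[F] Module.Dual F (D.V i)),
      ∀ (x : g) (v : D.V k), e (D.ρ k x v) = - (D.ρ i x : Module.End F (D.V i)).dualMap (e v)) :
    -- `M` is a group:
    (∀ m ∈ D.M, ∃ n ∈ D.M, m * n = 1 ∧ n * m = 1) ∧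
    -- the comorphism of the inversion map exists, and together with the comultiplication
    -- given by the comorphism of the multiplication map it satisfies the antipode axiom:
    (∀ f ∈ D.coordRing,
      (∃ h ∈ D.coordRing, ∀ m n : ↥D.M, m.1 * n.1 = 1 → n.1 * m.1 = 1 → h m = f n) ∧
      (∃ (N : ℕ) (gs hs : Fin N → (↥D.M → F)),
        (∀ k, gs k ∈ D.coordRing ∧ hs k ∈ D.coordRing) ∧
        (∀ (m m' : ↥D.M) (hmm : m.1 * m'.1 ∈ D.M),
          f ⟨m.1 * m'.1, hmm⟩ = ∑ k, gs k m * hs k m') ∧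
        (∀ m n : ↥D.M, m.1 * n.1 = 1 → n.1 * m.1 = 1 →
          ∑ k, gs k n * hs k m = f D.oneM))) := by
 classical
  have hbijM : ∀ m ∈ D.M, ∀ i, Function.Bijective (m i) := by
    intro m hm i
    haveI := hfd i
    obtain ⟨k, e, he⟩ := hdual i
    have key := TannakaAux.pairing D HG i e he hm
    have hinj : Function.Injective (m i) := by
      have hker : LinearMap.ker (m i) = ⊥ := by
        rw [Submodule.eq_bot_iff]
        intro v hv
        rw [LinearMap.mem_ker] at hv
        rw [← Module.forall_dual_apply_eq_zero_iff F v]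
        intro φ
        have := key (e.symm φ) v
        rw [hv, map_zero, e.apply_symm_apply] at this
        exact this.symm
      exact LinearMap.ker_eq_bot.mp hker
    exact ⟨hinj, (LinearMap.injective_iff_surjective_of_finrank_eq_finrank rfl).mp hinj⟩
  constructor
  · -- M is a group
    intro m hm
    have hbij := hbijM m hm
    let E : ∀ i, D.V i ≃ₗ[F] D.V i := fun i => LinearEquiv.ofBijective (m i) (hbij i)
    let n : ∀ i, Module.End F (D.V i) := fun i => ((E i).symm : D.V i →ₗ[F] D.V i)
    have hmn : ∀ i v, m i (n i v) = v := fun i v => (E i).apply_symm_apply v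
    have hnm : ∀ i v, n i (m i v) = v := fun i v => (E i).symm_apply_apply v
    refine ⟨n, ⟨⟨?_, ?_⟩, ?_, ?_⟩, ?_, ?_⟩
    · intro i φ _
      rw [hfull i]; exact Submodule.mem_top
    · intro i j f hf
      ext v
      apply (hbij j).1
      have h1 := congrArg (fun (q : D.V i →ₗ[F] D.V j) => q (n i v)) (hm.1.2 i j f hf)
      simp only [LinearMap.comp_apply] at h1 ⊢
      rw [← h1, hmn, hmn]
    · intro i j k e hek
      have hli : ∀ u, TensorProduct.map (n i) (n j) (TensorProduct.map (m i) (m j) u) = u := by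
        intro u
        rw [← LinearMap.comp_apply, ← TensorProduct.map_comp]
        have h1 : (n i) ∘ₗ (m i) = LinearMap.id := by ext v; exact hnm i v
        have h2 : (n j) ∘ₗ (m j) = LinearMap.id := by ext v; exact hnm j v
        rw [h1, h2, TensorProduct.map_id, LinearMap.id_apply]
      have hinj2 : Function.Injective (TensorProduct.map (m i) (m j)) :=
        Function.LeftInverse.injective hli
      ext v
      apply hinj2
      have h2 := congrArg (fun (q : D.V k →ₗ[F] (D.V i ⊗[F] D.V j)) => q (n k v))
        (hm.2.1 i j k e hek)
      simp only [LinearMap.comp_apply, LinearEquiv.coe_coe] at h2 ⊢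
      rw [← h2, hmn, ← LinearMap.comp_apply (TensorProduct.map (m i) (m j)),
        ← TensorProduct.map_comp]
      have h1 : (m i) ∘ₗ (n i) = LinearMap.id := by ext w; exact hmn i w
      have h2' : (m j) ∘ₗ (n j) = LinearMap.id := by ext w; exact hmn j w
      rw [h1, h2', TensorProduct.map_id, LinearMap.id_apply]
    · intro i hi
      have h1 := hm.2.2 i hi
      ext v
      apply (hbij i).1
      rw [hmn, h1]
      rfl
    · funext i
      ext v
      exact hmn i v
    · funext i
      ext v
      exact hnm i v
  · intro f hf
    obtain ⟨i, φ, v, hφ, rfl⟩ := hf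
    constructor
    · -- antipode comorphism
      obtain ⟨k, e, he⟩ := hdual i
      refine ⟨D.matCoef k ((Module.Dual.eval F (D.V i) v) ∘ₗ (e : D.V k →ₗ[F] Module.Dual F (D.V i))) (e.symm φ),
        ⟨k, _, _, by rw [hfull k]; exact Submodule.mem_top, rfl⟩, ?_⟩
      intro m n hmn _
      have key := TannakaAux.pairing D HG i e he m.2
      have hmnv : m.1 i ((n.1 i) v) = v := by
        have := congrArg (fun (q : Module.End F (D.V i)) => q v) (congrFun hmn i)
        simpa using this
      show (Module.Dual.eval F (D.V i) v ∘ₗ (e : D.V k →ₗ[F] Module.Dual F (D.V i)))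
          ((m.1 k) (e.symm φ)) = φ ((n.1 i) v)
      simp only [LinearMap.comp_apply, LinearEquiv.coe_coe, Module.Dual.eval_apply]
      calc (e ((m.1 k) (e.symm φ))) v
          = (e ((m.1 k) (e.symm φ))) ((m.1 i) ((n.1 i) v)) := by rw [hmnv]
        _ = (e (e.symm φ)) ((n.1 i) v) := key _ _
        _ = φ ((n.1 i) v) := by rw [e.apply_symm_apply]
    · -- comultiplication and antipode axiom
      haveI := hfd i
      let b := Module.finBasis F (D.V i)
      refine ⟨Module.finrank F (D.V i), fun l => D.matCoef i φ (b l),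
        fun l => D.matCoef i (b.coord l) v, ?_, ?_, ?_⟩
      · intro l
        exact ⟨⟨i, φ, b l, hφ, rfl⟩,
          ⟨i, b.coord l, v, by rw [hfull i]; exact Submodule.mem_top, rfl⟩⟩
      · intro m m' hmm
        show φ ((m.1 i) ((m'.1 i) v)) = _
        conv_lhs => rw [← Module.Basis.sum_repr b ((m'.1 i) v)]
        rw [map_sum, map_sum]
        refine Finset.sum_congr rfl fun l _ => ?_
        simp only [map_smul, smul_eq_mul, TannakaSetting.matCoef, Module.Basis.coord_apply]
        exact mul_comm _ _
      · intro m n _ hnm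
        have hnmv : n.1 i ((m.1 i) v) = v := by
          have := congrArg (fun (q : Module.End F (D.V i)) => q v) (congrFun hnm i)
          simpa using this
        have : ∑ l, D.matCoef i φ (b l) n * D.matCoef i (b.coord l) v m
            = φ ((n.1 i) ((m.1 i) v)) := by
          conv_rhs => rw [← Module.Basis.sum_repr b ((m.1 i) v)]
          rw [map_sum, map_sum]
          refine Finset.sum_congr rfl fun l _ => ?_
          simp only [map_smul, smul_eq_mul, TannakaSetting.matCoef, Module.Basis.coord_apply]
          exact mul_comm _ _
        rw [this, hnmv]
        show φ v = φ ((1 : Module.End F (D.V i)) v)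
        rw [Module.End.one_apply]
end
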